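/- Fix λ ≠ 0, β > 0, and I = diag(A,B,C) positive definite with (λ²/β²)(C−A) ≠ 1 and (λ²/β²)(C−B) ≠ 1. Suppose (ω₀, z₀) = (r e₃, s e₃) for some r, s ∈ ℝ, and suppose there exist ω, z ∈ ℝ³ with −λ e₃ × (I·(ω)) − λ C ω × e₃ − β² e₃ × z = C r e₃ and (ω − λ z) × e₃ = −s e₃. Then r = 0 and s = 0. -/
import Mathlib


open Matrix

/-- `e₃ = (0,0,1)`. -/
noncomputable def e3 : Fin 3 → ℝ := ![0, 0, 1]

/-- `I·w = (A w₁, B w₂, C w₃)` for `I = diag(A,B,C)`. -/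
noncomputable def Iv (A B C : ℝ) (w : Fin 3 → ℝ) : Fin 3 → ℝ := ![A * w 0, B * w 1, C * w 2]

/-- If the null-space element `(r e₃, s e₃)` lies in the range of the linearized operator,
i.e. there are `ω, z` with `−λ e₃ × (Iω) − λC ω × e₃ − β² e₃ × z = C r e₃` and
`(ω − λ z) × e₃ = −s e₃`, then `r = s = 0`. -/
theorem stmt4 (lam β A B C : ℝ) (hlam : lam ≠ 0) (hβ : 0 < β)
    (hA : 0 < A) (hB : 0 < B) (hC : 0 < C)
    (hKA : lam ^ 2 / β ^ 2 * (C - A) ≠ 1) (hKB : lam ^ 2 / β ^ 2 * (C - B) ≠ 1)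
    (r s : ℝ)
    (h : ∃ ω z : Fin 3 → ℝ,
      -lam • crossProduct e3 (Iv A B C ω) - (lam * C) • crossProduct ω e3
          - β ^ 2 • crossProduct e3 z = (C * r) • e3 ∧
      crossProduct (ω - lam • z) e3 = (-s) • e3) :
    r = 0 ∧ s = 0 := by
  obtain ⟨ω, z, h1, h2⟩ := h
  have e1 := congrFun h1 2
  have e2 := congrFun h2 2
  simp [crossProduct, e3, Iv] at e1 e2
  constructor
  · rcases e1 with h | h
    · exact absurd h hC.ne'
    · exact h
  · linarith
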